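/- Let H be a real Hilbert space and L a bounded linear operator on H admitting an asymptotically-invariant exhausting sequence of subspaces. Then for every finite-dimensional subspace W of H and every ε > 0, there exists a finite-dimensional subspace E of H with W ⊆ E and ‖L π_E − π_E L‖ < ε. -/

import Mathlib

open scoped InnerProductSpace

/-- The orthogonal projection of a Hilbert space onto (the closure of) a subspace, viewed as a
continuous linear operator `H →L[ℝ] H`. For a closed (e.g. finite-dimensional) subspace this is
the usual orthogonal projection onto it. -/
noncomputable def orthProj {H : Type*} [NormedAddCommGroup H] [InnerProductSpace ℝ H]
    [CompleteSpace H] (V : Submodule ℝ H) : H →L[ℝ] H :=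
  V.topologicalClosure.subtypeL.comp (Submodule.orthogonalProjectionOnto V.topologicalClosure)

/-- A sequence `{V n}` of finite-dimensional subspaces of `H` is an *asymptotically-invariant
exhausting sequence* with respect to a bounded operator `L` if it is increasing, the
commutators `[L, π_{V n}]` tend to `0` in operator norm, and `π_{V n} → 1` pointwise. -/
def IsAsymptInvExhaustingSeq {H : Type*} [NormedAddCommGroup H] [InnerProductSpace ℝ H]
    [CompleteSpace H] (L : H →L[ℝ] H) (V : ℕ → Submodule ℝ H) : Prop :=
  (∀ n, FiniteDimensional ℝ (V n)) ∧ Monotone V ∧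
  Filter.Tendsto (fun n => ‖L * orthProj (V n) - orthProj (V n) * L‖) Filter.atTop (nhds 0) ∧
  (∀ x : H, Filter.Tendsto (fun n => orthProj (V n) x) Filter.atTop (nhds x))

section Aux
variable {H : Type*} [NormedAddCommGroup H] [InnerProductSpace ℝ H] [CompleteSpace H]

lemma orthProj_mem (V : Submodule ℝ H) [FiniteDimensional ℝ V] (x : H) : orthProj V x ∈ V := by
  have h : V.topologicalClosure = V :=
    IsClosed.submodule_topologicalClosure_eq (Submodule.closed_of_finiteDimensional V)
  exact (le_of_eq h) (Submodule.orthogonalProjectionOnto V.topologicalClosure x).2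

lemma orthProj_inner (V : Submodule ℝ H) [FiniteDimensional ℝ V] (x : H) {w : H} (hw : w ∈ V) :
    ⟪x - orthProj V x, w⟫_ℝ = 0 :=
  Submodule.starProjection_inner_eq_zero (K := V.topologicalClosure) x w (Submodule.le_topologicalClosure V hw)

lemma orthProj_min (V : Submodule ℝ H) [FiniteDimensional ℝ V] (x : H) {e : H} (he : e ∈ V) :
    ‖x - orthProj V x‖ ≤ ‖x - e‖ := by
  have h0 : ⟪x - orthProj V x, orthProj V x - e⟫_ℝ = 0 :=
    orthProj_inner V x (Submodule.sub_mem V (orthProj_mem V x) he)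
  have h1 : ‖x - e‖^2 = ‖x - orthProj V x‖^2 + ‖orthProj V x - e‖^2 := by
    have : x - e = (x - orthProj V x) + (orthProj V x - e) := by abel
    rw [this, norm_add_sq_real, h0]; ring
  nlinarith [norm_nonneg (x - e), norm_nonneg (x - orthProj V x), sq_nonneg ‖orthProj V x - e‖]

lemma orthProj_norm_le (V : Submodule ℝ H) [FiniteDimensional ℝ V] (x : H) :
    ‖orthProj V x‖ ≤ ‖x‖ := by
  have h0 : ⟪x - orthProj V x, orthProj V x⟫_ℝ = 0 := orthProj_inner V x (orthProj_mem V x)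
  have h1 : ‖x‖^2 = ‖x - orthProj V x‖^2 + ‖orthProj V x‖^2 := by
    have : x = (x - orthProj V x) + orthProj V x := by abel
    nth_rewrite 1 [this]
    rw [norm_add_sq_real, h0]; ring
  nlinarith [norm_nonneg x, norm_nonneg (orthProj V x), sq_nonneg ‖x - orthProj V x‖]

lemma orthProj_eq_self (V : Submodule ℝ H) [FiniteDimensional ℝ V] {x : H} (hx : x ∈ V) :
    orthProj V x = x := by
  have := orthProj_min V x hx
  have h0 : x - orthProj V x = 0 :=
    norm_sub_eq_zero_iff.mp (le_antisymm (by simpa using this) (norm_nonneg _))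
  exact (sub_eq_zero.mp h0).symm

lemma key_lemma (V W : Submodule ℝ H) [FiniteDimensional ℝ V] [FiniteDimensional ℝ W]
    {δ : ℝ} (hδ0 : 0 ≤ δ) (hδ1 : δ < 1)
    (hd : ∀ w ∈ W, ‖w - orthProj V w‖ ≤ δ * ‖w‖) (x : H) :
    ‖orthProj (W ⊔ (V ⊓ Wᗮ)) x - orthProj V x‖ ≤ (δ + δ / (1 - δ)) * ‖x‖ := by
  haveI hFDinf : FiniteDimensional ℝ ↥(V ⊓ Wᗮ) := Submodule.finiteDimensional_of_le inf_le_left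
  haveI hFDE : FiniteDimensional ℝ ↥(W ⊔ (V ⊓ Wᗮ)) := Submodule.finiteDimensional_sup _ _
  set E := W ⊔ (V ⊓ Wᗮ) with hE
  have hWE : W ≤ E := le_sup_left
  have hVE : V ⊓ Wᗮ ≤ E := le_sup_right
  have h1δ : (0:ℝ) < 1 - δ := by linarith
  -- claim 1 : for y ⊥ V, ‖orthProj E y‖ ≤ δ‖y‖
  have claim1 : ∀ y : H, (∀ v ∈ V, ⟪y, v⟫_ℝ = 0) → ‖orthProj E y‖ ≤ δ * ‖y‖ := by
    intro y hy
    set r := orthProj E y with hr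
    obtain ⟨w, hw, v', hv', hsum⟩ := Submodule.mem_sup.mp (orthProj_mem E y)
    have hrr : ⟪y, r⟫_ℝ = ‖r‖^2 := by
      have h0 : ⟪y - r, r⟫_ℝ = 0 := orthProj_inner E y (orthProj_mem E y)
      have := inner_sub_left (𝕜 := ℝ) y r r
      rw [h0] at this
      rw [real_inner_self_eq_norm_sq] at this
      linarith [this]
    have hwv' : ⟪w, v'⟫_ℝ = 0 := hv'.2 w hw
    have hwr : ‖w‖ ≤ ‖r‖ := by
      have hsum2 : r = w + v' := hsum.symm
      have : ‖r‖^2 = ‖w‖^2 + ‖v'‖^2 := by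
        rw [hsum2, norm_add_sq_real, hwv']; ring
      nlinarith [norm_nonneg w, norm_nonneg r, sq_nonneg ‖v'‖]
    have hyv' : ⟪y, v'⟫_ℝ = 0 := hy v' hv'.1
    have hyw : ⟪y, w⟫_ℝ = ⟪y, w - orthProj V w⟫_ℝ := by
      have h2 : ⟪y, orthProj V w⟫_ℝ = 0 := hy _ (orthProj_mem V w)
      rw [inner_sub_right, h2]; ring
    have hbound : ‖r‖^2 ≤ δ * ‖r‖ * ‖y‖ := by
      have : ⟪y, r⟫_ℝ = ⟪y, w⟫_ℝ + ⟪y, v'⟫_ℝ := by rw [← inner_add_right, hsum]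
      rw [hrr, hyv', add_zero, hyw] at this
      calc ‖r‖^2 = ⟪y, w - orthProj V w⟫_ℝ := this
        _ ≤ ‖y‖ * ‖w - orthProj V w‖ := real_inner_le_norm _ _
        _ ≤ ‖y‖ * (δ * ‖w‖) := by
            have := hd w hw
            nlinarith [norm_nonneg y]
        _ ≤ δ * ‖r‖ * ‖y‖ := by
            nlinarith [mul_nonneg (mul_nonneg hδ0 (norm_nonneg y)) (sub_nonneg.mpr hwr)]
    rcases eq_or_lt_of_le (norm_nonneg r) with h | h
    · rw [← h]; positivity
    · nlinarith [h]
  -- claim 2 : for v ∈ V, ‖v - orthProj E v‖ ≤ (δ/(1-δ)) ‖v‖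
  have claim2 : ∀ v, v ∈ V → ‖v - orthProj E v‖ ≤ δ / (1 - δ) * ‖v‖ := by
    intro v hv
    set W' : Submodule ℝ H := W.map (orthProj V : H →ₗ[ℝ] H) with hW'
    haveI : FiniteDimensional ℝ ↥W' := Module.Finite.map W (orthProj V : H →ₗ[ℝ] H)
    have hW'V : W' ≤ V := by
      rintro _ ⟨w, hw, rfl⟩
      exact orthProj_mem V w
    set u := orthProj W' v with hu
    obtain ⟨w, hw, hwu⟩ := Submodule.mem_map.mp (orthProj_mem W' v)
    have hvu : v - u ∈ V ⊓ Wᗮ := by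
      constructor
      · exact Submodule.sub_mem V hv (hW'V (orthProj_mem W' v))
      · intro w₀ hw₀
        have ha : ⟪w₀ - orthProj V w₀, v - u⟫_ℝ = 0 :=
          orthProj_inner V w₀ (Submodule.sub_mem V hv (hW'V (orthProj_mem W' v)))
        have hb : ⟪orthProj V w₀, v - u⟫_ℝ = 0 := by
          rw [real_inner_comm]
          exact orthProj_inner W' v (Submodule.mem_map_of_mem hw₀)
        have : ⟪w₀, v - u⟫_ℝ = ⟪w₀ - orthProj V w₀, v - u⟫_ℝ + ⟪orthProj V w₀, v - u⟫_ℝ := by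
          rw [← inner_add_left]; congr 1; abel
        rw [this, ha, hb]; ring
    have he : w + (v - u) ∈ E := Submodule.add_mem E (hWE hw) (hVE hvu)
    have hmin : ‖v - orthProj E v‖ ≤ ‖v - (w + (v - u))‖ := orthProj_min E v he
    have hve : v - (w + (v - u)) = -(w - orthProj V w) := by rw [show orthProj V w = u from hwu]; abel
    have hwnorm : (1 - δ) * ‖w‖ ≤ ‖u‖ := by
      have h1 : ‖w‖ ≤ ‖w - orthProj V w‖ + ‖orthProj V w‖ := by
        nth_rewrite 1 [show w = (w - orthProj V w) + orthProj V w by abel]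
        exact norm_add_le _ _
      have h2 := hd w hw
      have h3 : ‖orthProj V w‖ = ‖u‖ := by rw [show orthProj V w = u from hwu]
      linarith
    have hu_le : ‖u‖ ≤ ‖v‖ := orthProj_norm_le W' v
    calc ‖v - orthProj E v‖ ≤ ‖v - (w + (v - u))‖ := hmin
      _ = ‖w - orthProj V w‖ := by rw [hve, norm_neg]
      _ ≤ δ * ‖w‖ := hd w hw
      _ ≤ δ / (1 - δ) * ‖u‖ := by
          rw [div_mul_eq_mul_div, le_div_iff₀ h1δ]
          nlinarith [hδ0]
      _ ≤ δ / (1 - δ) * ‖v‖ := by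
          have : 0 ≤ δ / (1 - δ) := by positivity
          nlinarith
  -- assemble
  have hsplit : orthProj E x - orthProj V x
      = orthProj E (x - orthProj V x) + (orthProj E (orthProj V x) - orthProj V x) := by
    rw [map_sub]; abel
  have h1 : ‖orthProj E (x - orthProj V x)‖ ≤ δ * ‖x‖ := by
    have := claim1 (x - orthProj V x) (fun v hv => orthProj_inner V x hv)
    have hxle : ‖x - orthProj V x‖ ≤ ‖x‖ := by
      simpa using orthProj_min V x (Submodule.zero_mem V)
    nlinarith [hδ0]
  have h2 : ‖orthProj E (orthProj V x) - orthProj V x‖ ≤ δ / (1 - δ) * ‖x‖ := by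
    have := claim2 (orthProj V x) (orthProj_mem V x)
    have := orthProj_norm_le V x
    have h3 : 0 ≤ δ / (1 - δ) := by positivity
    rw [norm_sub_rev]
    nlinarith
  calc ‖orthProj E x - orthProj V x‖
      ≤ ‖orthProj E (x - orthProj V x)‖ + ‖orthProj E (orthProj V x) - orthProj V x‖ := by
        rw [hsplit]; exact norm_add_le _ _
    _ ≤ δ * ‖x‖ + δ / (1 - δ) * ‖x‖ := add_le_add h1 h2
    _ = (δ + δ / (1 - δ)) * ‖x‖ := by ring

lemma uniform_small (W : Submodule ℝ H) [FiniteDimensional ℝ W]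
    (V : ℕ → Submodule ℝ H)
    (hPt : ∀ x : H, Filter.Tendsto (fun n => orthProj (V n) x) Filter.atTop (nhds x))
    {δ : ℝ} (hδ : 0 < δ) :
    ∀ᶠ m in Filter.atTop, ∀ w ∈ W, ‖w - orthProj (V m) w‖ ≤ δ * ‖w‖ := by
  set b := Module.finBasis ℝ W with hb
  set C : ℝ := ∑ i, ‖LinearMap.toContinuousLinearMap (b.coord i)‖ with hC
  have hC0 : 0 ≤ C := Finset.sum_nonneg fun i _ => ContinuousLinearMap.opNorm_nonneg _
  have hη : 0 < δ / (C + 1) := by positivity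
  have h2 : ∀ᶠ m in Filter.atTop, ∀ i,
      ‖((b i : H)) - orthProj (V m) (b i)‖ ≤ δ / (C + 1) := by
    rw [Filter.eventually_all]
    intro i
    filter_upwards [(hPt (b i)).eventually (Metric.closedBall_mem_nhds _ hη)] with m hm
    rw [norm_sub_rev, ← dist_eq_norm]
    exact hm
  filter_upwards [h2] with m hm w hw
  set A : H →L[ℝ] H := ContinuousLinearMap.id ℝ H - orthProj (V m) with hA
  have hAw : ∀ z : H, A z = z - orthProj (V m) z := fun z => rfl
  set wc : W := ⟨w, hw⟩ with hwc
  have hrepr : w = ∑ i, b.repr wc i • ((b i : H)) := by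
    have := b.sum_repr wc
    have h3 := congrArg (Submodule.subtype W) this
    simp only [map_sum, map_smul] at h3
    simpa using h3.symm
  have hAsum : A w = ∑ i, b.repr wc i • A (b i) := by
    rw [hrepr, map_sum]
    simp [map_smul]
  have hcoord : ∀ i, |b.repr wc i| ≤ ‖LinearMap.toContinuousLinearMap (b.coord i)‖ * ‖w‖ := by
    intro i
    have h4 := (LinearMap.toContinuousLinearMap (b.coord i)).le_opNorm wc
    simp only [LinearMap.coe_toContinuousLinearMap'] at h4
    have h5 : ‖(wc : H)‖ = ‖w‖ := rfl
    have h6 : (b.coord i) wc = b.repr wc i := rfl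
    calc |b.repr wc i| = ‖(b.coord i) wc‖ := by rw [h6]; exact (Real.norm_eq_abs _).symm
      _ ≤ ‖LinearMap.toContinuousLinearMap (b.coord i)‖ * ‖wc‖ := h4
      _ = ‖LinearMap.toContinuousLinearMap (b.coord i)‖ * ‖w‖ := by
          rw [show ‖wc‖ = ‖w‖ from rfl]
  calc ‖w - orthProj (V m) w‖ = ‖A w‖ := by rw [hAw]
    _ ≤ ∑ i, ‖b.repr wc i • A (b i)‖ := by rw [hAsum]; exact norm_sum_le _ _
    _ ≤ ∑ i, (‖LinearMap.toContinuousLinearMap (b.coord i)‖ * ‖w‖) * (δ / (C + 1)) := by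
        apply Finset.sum_le_sum
        intro i _
        rw [norm_smul, Real.norm_eq_abs]
        have h7 : ‖A (b i)‖ ≤ δ / (C + 1) := by rw [hAw]; exact hm i
        have h8 := hcoord i
        have h9 : (0:ℝ) ≤ |b.repr wc i| := abs_nonneg _
        nlinarith [mul_nonneg (ContinuousLinearMap.opNorm_nonneg (LinearMap.toContinuousLinearMap (b.coord i))) (norm_nonneg w)]
    _ = C * ‖w‖ * (δ / (C + 1)) := by rw [← Finset.sum_mul, ← Finset.sum_mul]
    _ ≤ δ * ‖w‖ := by
        rw [div_eq_mul_inv]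
        have hCp : (0:ℝ) < C + 1 := by linarith
        have h11 : C * (C + 1)⁻¹ ≤ 1 := by
          rw [mul_inv_le_iff₀ hCp]; linarith
        have h10 : C * (C + 1)⁻¹ * (δ * ‖w‖) ≤ 1 * (δ * ‖w‖) :=
          mul_le_mul_of_nonneg_right h11 (by positivity)
        nlinarith [h10]

theorem exists_finiteDimensional_almost_invariant_extension'
    (L : H →L[ℝ] H)
    (hL : ∃ V : ℕ → Submodule ℝ H,
      (∀ n, FiniteDimensional ℝ (V n)) ∧ Monotone V ∧
      Filter.Tendsto (fun n => ‖L * orthProj (V n) - orthProj (V n) * L‖) Filter.atTop (nhds 0) ∧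
      (∀ x : H, Filter.Tendsto (fun n => orthProj (V n) x) Filter.atTop (nhds x))) :
    ∀ W : Submodule ℝ H, FiniteDimensional ℝ W → ∀ ε > (0:ℝ),
      ∃ E : Submodule ℝ H, FiniteDimensional ℝ E ∧ W ≤ E ∧
        ‖L * orthProj E - orthProj E * L‖ < ε := by
  obtain ⟨V, hFD, hMono, hComm, hPt⟩ := hL
  intro W hW ε hε
  haveI := hW
  set δ : ℝ := min (1/2) (ε / (16 * (‖L‖ + 1))) with hδdef
  have hδ0 : 0 < δ := lt_min (by norm_num) (by positivity)
  have hδhalf : δ ≤ 1/2 := min_le_left _ _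
  have hδε : δ ≤ ε / (16 * (‖L‖ + 1)) := min_le_right _ _
  have h1 : ∀ᶠ m in Filter.atTop, ‖L * orthProj (V m) - orthProj (V m) * L‖ < ε/2 :=
    hComm.eventually (gt_mem_nhds (half_pos hε))
  obtain ⟨m, hm1, hm2⟩ := (h1.and (uniform_small W V hPt hδ0)).exists
  haveI := hFD m
  haveI : FiniteDimensional ℝ ↥(V m ⊓ Wᗮ) := Submodule.finiteDimensional_of_le inf_le_left
  refine ⟨W ⊔ (V m ⊓ Wᗮ), Submodule.finiteDimensional_sup _ _, le_sup_left, ?_⟩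
  set E := W ⊔ (V m ⊓ Wᗮ) with hE
  haveI : FiniteDimensional ℝ ↥E := Submodule.finiteDimensional_sup _ _
  set D : H →L[ℝ] H := orthProj E - orthProj (V m) with hD
  have hDb : ‖D‖ ≤ 3 * δ := by
    apply ContinuousLinearMap.opNorm_le_bound _ (by positivity)
    intro x
    have := key_lemma (V m) W hδ0.le (by linarith) hm2 x
    have h2 : δ / (1 - δ) ≤ 2 * δ := by
      rw [div_le_iff₀ (by linarith)]
      nlinarith
    have h3 : D x = orthProj E x - orthProj (V m) x := rfl
    rw [h3]
    calc ‖orthProj E x - orthProj (V m) x‖ ≤ (δ + δ / (1 - δ)) * ‖x‖ := this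
      _ ≤ 3 * δ * ‖x‖ := by nlinarith [norm_nonneg x]
  have hsplit : L * orthProj E - orthProj E * L
      = (L * orthProj (V m) - orthProj (V m) * L) + (L * D - D * L) := by
    have : orthProj E = orthProj (V m) + D := by rw [hD]; abel
    rw [this]; noncomm_ring
  have hLD : ‖L * D - D * L‖ ≤ 2 * ‖L‖ * ‖D‖ := by
    calc ‖L * D - D * L‖ ≤ ‖L * D‖ + ‖D * L‖ := norm_sub_le _ _
      _ ≤ ‖L‖ * ‖D‖ + ‖D‖ * ‖L‖ := add_le_add (norm_mul_le _ _) (norm_mul_le _ _)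
      _ = 2 * ‖L‖ * ‖D‖ := by ring
  have hL0 : (0:ℝ) ≤ ‖L‖ := norm_nonneg L
  have hfin : 2 * ‖L‖ * ‖D‖ ≤ ε / 2 := by
    have h4 : 2 * ‖L‖ * ‖D‖ ≤ 6 * ‖L‖ * δ := by nlinarith
    have h5 : 6 * ‖L‖ * δ ≤ 6 * ‖L‖ * (ε / (16 * (‖L‖ + 1))) := by nlinarith
    have h6 : 6 * ‖L‖ * (ε / (16 * (‖L‖ + 1))) ≤ ε / 2 := by
      have ht : (0:ℝ) < 16 * (‖L‖ + 1) := by positivity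
      have heq : 6 * ‖L‖ * (ε / (16 * (‖L‖ + 1))) = (6 * ‖L‖ * ε) / (16 * (‖L‖ + 1)) := by ring
      rw [heq, div_le_iff₀ ht]
      nlinarith
    linarith
  calc ‖L * orthProj E - orthProj E * L‖
      ≤ ‖L * orthProj (V m) - orthProj (V m) * L‖ + ‖L * D - D * L‖ := by
        rw [hsplit]; exact norm_add_le _ _
    _ < ε/2 + ε/2 := by
        have := hLD.trans hfin
        exact add_lt_add_of_lt_of_le hm1 this
    _ = ε := by ring

end Aux

/-- If a bounded operator `L` on a real Hilbert space admits an
asymptotically-invariant exhausting sequence, then every finite-dimensional subspace `W` is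
contained in a finite-dimensional subspace `E` with `‖L π_E − π_E L‖ < ε`. -/
theorem exists_finiteDimensional_almost_invariant_extension
    {H : Type*} [NormedAddCommGroup H] [InnerProductSpace ℝ H] [CompleteSpace H]
    (L : H →L[ℝ] H)
    (hL : ∃ V : ℕ → Submodule ℝ H, IsAsymptInvExhaustingSeq L V) :
    ∀ W : Submodule ℝ H, FiniteDimensional ℝ W → ∀ ε > (0:ℝ),
      ∃ E : Submodule ℝ H, FiniteDimensional ℝ E ∧ W ≤ E ∧
        ‖L * orthProj E - orthProj E * L‖ < ε := by
  exact exists_finiteDimensional_almost_invariant_extension' L hL
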